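/- arXiv:2501.02537 — 2 statements merged into one kernel-verified Lean document; each statement's English description precedes it below -/
import Mathlib

section
/- Let (X, 𝒜, ν) be a probability space and T : X → X a measurable map preserving ν. Let A ∈ 𝒜, and let D̃ > 0, K ≥ 1 and β ∈ (0,1) be real constants and M₁ a positive integer such that |ν(T^{−n}A ∩ A) − ν(A)²| ≤ D̃ K ν(A)² βⁿ for every integer n > M₁. Then for every positive integer M, Σ_{m=1}^M Σ_{n=1}^M ( ν(T^{−m}A ∩ T^{−n}A) − ν(A)² ) ≤ 2 M (M₁ + 1) ν(A) + 2 D̃ K M ν(A)² β^{M₁+1} / (1 − β). -/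
open MeasureTheory

/-- Correlation-sum bound under exponential decay of correlations for the set `A` beyond
time `M₁` (Lemma 8.1). -/
theorem stmt_1 {X : Type*} [MeasurableSpace X] (ν : Measure X) [IsProbabilityMeasure ν]
    (T : X → X) (hT : MeasurePreserving T ν ν)
    (A : Set X) (hA : MeasurableSet A)
    (D K β : ℝ) (hD : 0 < D) (hK : 1 ≤ K) (hβ0 : 0 < β) (hβ1 : β < 1)
    (M₁ : ℕ) (hM₁ : 0 < M₁)
    (hdecay : ∀ n : ℕ, M₁ < n →
      |(ν ((T^[n]) ⁻¹' A ∩ A)).toReal - (ν A).toReal ^ 2|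
        ≤ D * K * (ν A).toReal ^ 2 * β ^ n)
    (M : ℕ) (hM : 0 < M) :
    ∑ m ∈ Finset.Icc 1 M, ∑ n ∈ Finset.Icc 1 M,
        ((ν ((T^[m]) ⁻¹' A ∩ (T^[n]) ⁻¹' A)).toReal - (ν A).toReal ^ 2)
      ≤ 2 * (M : ℝ) * ((M₁ : ℝ) + 1) * (ν A).toReal
        + 2 * D * K * (M : ℝ) * (ν A).toReal ^ 2 * β ^ (M₁ + 1) / (1 - β) := by
  set a := (ν A).toReal with ha
  have ha0 : 0 ≤ a := ENNReal.toReal_nonneg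
  have hDK : 0 ≤ D * K * a ^ 2 := by positivity
  have h1β : 0 < 1 - β := by linarith
  -- measure identity
  have h2 : ∀ m n : ℕ, m ≤ n →
      ν ((T^[m]) ⁻¹' A ∩ (T^[n]) ⁻¹' A) = ν ((T^[n - m]) ⁻¹' A ∩ A) := by
    intro m n hmn
    have hset : (T^[n]) ⁻¹' A = (T^[m]) ⁻¹' ((T^[n - m]) ⁻¹' A) := by
      rw [← Set.preimage_comp, ← Function.iterate_add, Nat.sub_add_cancel hmn]
    rw [hset, ← Set.preimage_inter,
      (hT.iterate m).measure_preimage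
        ((hA.inter ((hT.iterate (n - m)).measurable hA)).nullMeasurableSet),
      Set.inter_comm]
  have key : ∀ m n : ℕ, ν ((T^[m]) ⁻¹' A ∩ (T^[n]) ⁻¹' A)
      = ν ((T^[Nat.dist m n]) ⁻¹' A ∩ A) := by
    intro m n
    rcases le_total m n with h | h
    · rw [h2 m n h, Nat.dist_eq_sub_of_le h]
    · rw [Set.inter_comm, h2 n m h, Nat.dist_eq_sub_of_le_right h]
  -- pointwise bound
  have bound : ∀ m n : ℕ,
      (ν ((T^[m]) ⁻¹' A ∩ (T^[n]) ⁻¹' A)).toReal - a ^ 2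
        ≤ if Nat.dist m n ≤ M₁ then a else D * K * a ^ 2 * β ^ (Nat.dist m n) := by
    intro m n
    rw [key m n]
    set k := Nat.dist m n with hk
    split_ifs with hkM
    · have hle : ν ((T^[k]) ⁻¹' A ∩ A) ≤ ν A := measure_mono Set.inter_subset_right
      have h1 : (ν ((T^[k]) ⁻¹' A ∩ A)).toReal ≤ a :=
        ENNReal.toReal_mono (measure_ne_top ν A) hle
      nlinarith [sq_nonneg a]
    · have := (abs_le.mp (hdecay k (by omega))).2
      linarith
  -- geometric sum bound
  have hgeo : ∀ n : ℕ, ∑ i ∈ Finset.range n, β ^ i ≤ 1 / (1 - β) := by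
    intro n
    rw [geom_sum_eq (by linarith : β ≠ 1)]
    rw [show (β ^ n - 1) / (β - 1) = (1 - β ^ n) / (1 - β) by
      rw [← neg_div_neg_eq]; ring_nf]
    rw [div_le_div_iff_of_pos_right h1β]
    nlinarith [pow_nonneg hβ0.le n]
  have hG : ∑ k ∈ Finset.Icc (M₁ + 1) M, β ^ k ≤ β ^ (M₁ + 1) / (1 - β) := by
    rw [← Finset.Ico_add_one_right_eq_Icc, Finset.sum_Ico_eq_sum_range]
    have : ∀ i ∈ Finset.range (M + 1 - (M₁ + 1)), β ^ (M₁ + 1 + i) = β ^ (M₁ + 1) * β ^ i := by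
      intro i _; rw [pow_add]
    rw [Finset.sum_congr rfl this, ← Finset.mul_sum]
    rw [div_eq_mul_one_div]
    exact mul_le_mul_of_nonneg_left (hgeo _) (pow_nonneg hβ0.le _)
  have hGnonneg : ∀ (s : Finset ℕ), (0:ℝ) ≤ ∑ k ∈ s, β ^ k :=
    fun s => Finset.sum_nonneg fun k _ => pow_nonneg hβ0.le k
  -- inner sum bound
  have inner : ∀ m ∈ Finset.Icc 1 M,
      ∑ n ∈ Finset.Icc 1 M,
          (if Nat.dist m n ≤ M₁ then a else D * K * a ^ 2 * β ^ (Nat.dist m n))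
        ≤ 2 * ((M₁ : ℝ) + 1) * a + 2 * D * K * a ^ 2 * β ^ (M₁ + 1) / (1 - β) := by
    intro m hm
    rw [Finset.mem_Icc] at hm
    rw [Finset.sum_ite]
    have hpart1 : ∑ _n ∈ (Finset.Icc 1 M).filter (fun n => Nat.dist m n ≤ M₁), a
        ≤ 2 * ((M₁ : ℝ) + 1) * a := by
      rw [Finset.sum_const, nsmul_eq_mul]
      have hcard : ((Finset.Icc 1 M).filter (fun n => Nat.dist m n ≤ M₁)).card
          ≤ 2 * M₁ + 1 := by
        have hsub : (Finset.Icc 1 M).filter (fun n => Nat.dist m n ≤ M₁)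
            ⊆ Finset.Icc (m - M₁) (m + M₁) := by
          intro n hn
          simp only [Finset.mem_filter] at hn
          simp only [Finset.mem_filter, Finset.mem_Icc, Nat.dist] at hn ⊢
          omega
        calc ((Finset.Icc 1 M).filter (fun n => Nat.dist m n ≤ M₁)).card
            ≤ (Finset.Icc (m - M₁) (m + M₁)).card := Finset.card_le_card hsub
          _ ≤ 2 * M₁ + 1 := by rw [Nat.card_Icc]; omega
      have : (((Finset.Icc 1 M).filter (fun n => Nat.dist m n ≤ M₁)).card : ℝ)
          ≤ 2 * (M₁ : ℝ) + 1 := by exact_mod_cast hcard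
      nlinarith
    have hpart2 : ∑ n ∈ (Finset.Icc 1 M).filter (fun n => ¬ Nat.dist m n ≤ M₁),
          D * K * a ^ 2 * β ^ (Nat.dist m n)
        ≤ 2 * D * K * a ^ 2 * β ^ (M₁ + 1) / (1 - β) := by
      set S2 := (Finset.Icc 1 M).filter (fun n => ¬ Nat.dist m n ≤ M₁) with hS2
      have hsum : ∑ n ∈ S2, D * K * a ^ 2 * β ^ (Nat.dist m n)
          = D * K * a ^ 2 * ∑ n ∈ S2, β ^ (Nat.dist m n) := by
        rw [Finset.mul_sum]
      rw [hsum]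
      have hsplit : ∑ n ∈ S2, β ^ (Nat.dist m n)
          = ∑ n ∈ S2.filter (fun n => n < m), β ^ (Nat.dist m n)
            + ∑ n ∈ S2.filter (fun n => ¬ n < m), β ^ (Nat.dist m n) :=
        (Finset.sum_filter_add_sum_filter_not S2 _ _).symm
      have hlow : ∑ n ∈ S2.filter (fun n => n < m), β ^ (Nat.dist m n)
          ≤ ∑ k ∈ Finset.Icc (M₁ + 1) M, β ^ k := by
        have him : (S2.filter (fun n => n < m)).image (fun n => m - n)
            ⊆ Finset.Icc (M₁ + 1) M := by
          intro k hk
          simp only [Finset.mem_image, hS2, Finset.mem_filter] at hk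
          simp only [Finset.mem_image, hS2, Finset.mem_filter, Finset.mem_Icc,
            Nat.dist] at hk ⊢
          omega
        have hinj : Set.InjOn (fun n => m - n) (S2.filter (fun n => n < m)) := by
          intro x hx y hy hxy
          simp only [Finset.coe_filter, Set.mem_setOf_eq] at hx hy
          simp only at hxy
          omega
        calc ∑ n ∈ S2.filter (fun n => n < m), β ^ (Nat.dist m n)
            = ∑ k ∈ (S2.filter (fun n => n < m)).image (fun n => m - n), β ^ k := by
              rw [Finset.sum_image hinj]
              apply Finset.sum_congr rfl
              intro n hn
              simp only [hS2, Finset.mem_filter] at hn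
              rw [Nat.dist_eq_sub_of_le_right hn.2.le]
          _ ≤ ∑ k ∈ Finset.Icc (M₁ + 1) M, β ^ k :=
              Finset.sum_le_sum_of_subset_of_nonneg him
                (fun k _ _ => pow_nonneg hβ0.le k)
      have hhigh : ∑ n ∈ S2.filter (fun n => ¬ n < m), β ^ (Nat.dist m n)
          ≤ ∑ k ∈ Finset.Icc (M₁ + 1) M, β ^ k := by
        have him : (S2.filter (fun n => ¬ n < m)).image (fun n => n - m)
            ⊆ Finset.Icc (M₁ + 1) M := by
          intro k hk
          simp only [Finset.mem_image, hS2, Finset.mem_filter] at hk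
          simp only [Finset.mem_image, hS2, Finset.mem_filter, Finset.mem_Icc,
            Nat.dist] at hk ⊢
          omega
        have hinj : Set.InjOn (fun n => n - m) (S2.filter (fun n => ¬ n < m)) := by
          intro x hx y hy hxy
          simp only [Finset.coe_filter, Set.mem_setOf_eq] at hx hy
          simp only at hxy
          omega
        calc ∑ n ∈ S2.filter (fun n => ¬ n < m), β ^ (Nat.dist m n)
            = ∑ k ∈ (S2.filter (fun n => ¬ n < m)).image (fun n => n - m), β ^ k := by
              rw [Finset.sum_image hinj]
              apply Finset.sum_congr rfl
              intro n hn
              simp only [hS2, Finset.mem_filter, not_lt] at hn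
              rw [Nat.dist_eq_sub_of_le hn.2]
          _ ≤ ∑ k ∈ Finset.Icc (M₁ + 1) M, β ^ k :=
              Finset.sum_le_sum_of_subset_of_nonneg him
                (fun k _ _ => pow_nonneg hβ0.le k)
      have htwo : ∑ n ∈ S2, β ^ (Nat.dist m n) ≤ 2 * (β ^ (M₁ + 1) / (1 - β)) := by
        rw [hsplit]
        have := hG
        nlinarith [hlow, hhigh, hG]
      calc D * K * a ^ 2 * ∑ n ∈ S2, β ^ (Nat.dist m n)
          ≤ D * K * a ^ 2 * (2 * (β ^ (M₁ + 1) / (1 - β))) :=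
            mul_le_mul_of_nonneg_left htwo hDK
        _ = 2 * D * K * a ^ 2 * β ^ (M₁ + 1) / (1 - β) := by ring
    linarith
  -- conclude
  calc ∑ m ∈ Finset.Icc 1 M, ∑ n ∈ Finset.Icc 1 M,
        ((ν ((T^[m]) ⁻¹' A ∩ (T^[n]) ⁻¹' A)).toReal - a ^ 2)
      ≤ ∑ m ∈ Finset.Icc 1 M, ∑ n ∈ Finset.Icc 1 M,
          (if Nat.dist m n ≤ M₁ then a else D * K * a ^ 2 * β ^ (Nat.dist m n)) :=
        Finset.sum_le_sum fun m _ => Finset.sum_le_sum fun n _ => bound m n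
    _ ≤ ∑ _m ∈ Finset.Icc 1 M,
          (2 * ((M₁ : ℝ) + 1) * a + 2 * D * K * a ^ 2 * β ^ (M₁ + 1) / (1 - β)) :=
        Finset.sum_le_sum inner
    _ = (M : ℝ) * (2 * ((M₁ : ℝ) + 1) * a + 2 * D * K * a ^ 2 * β ^ (M₁ + 1) / (1 - β)) := by
        rw [Finset.sum_const, Nat.card_Icc, nsmul_eq_mul]
        norm_num
    _ = 2 * (M : ℝ) * ((M₁ : ℝ) + 1) * a
        + 2 * D * K * (M : ℝ) * a ^ 2 * β ^ (M₁ + 1) / (1 - β) := by ring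
end

section
/- Let (X, 𝒜, ν) be a probability space and T : X → X a measurable map preserving ν. Let A ∈ 𝒜, and let D̃ > 0, K ≥ 1 and β ∈ (0,1) be real constants and M₁ a positive integer such that |ν(T^{−n}A ∩ A) − ν(A)²| ≤ D̃ K ν(A)² βⁿ for every integer n > M₁. Then for every positive integer M, with S_M(x) = Σ_{j=1}^M 1_A(T^j x), one has ∫_X ( S_M(x)/M − ν(A) )² dν(x) ≤ 2 (M₁ + 1) ν(A) / M + 2 D̃ K ν(A)² β^{M₁+1} / ((1 − β) M). -/
open MeasureTheory

/-- L² deviation of the visit frequency `S_M/M` from `ν(A)` under exponential decay of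
correlations for the set `A` beyond time `M₁` (Lemmas 8.1 + 8.2). -/
theorem stmt_2 {X : Type*} [MeasurableSpace X] (ν : Measure X) [IsProbabilityMeasure ν]
    (T : X → X) (hT : MeasurePreserving T ν ν)
    (A : Set X) (hA : MeasurableSet A)
    (D K β : ℝ) (hD : 0 < D) (hK : 1 ≤ K) (hβ0 : 0 < β) (hβ1 : β < 1)
    (M₁ : ℕ) (hM₁ : 0 < M₁)
    (hdecay : ∀ n : ℕ, M₁ < n →
      |(ν ((T^[n]) ⁻¹' A ∩ A)).toReal - (ν A).toReal ^ 2|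
        ≤ D * K * (ν A).toReal ^ 2 * β ^ n)
    (M : ℕ) (hM : 0 < M) :
    ∫ x, ((∑ j ∈ Finset.Icc 1 M, A.indicator (fun _ => (1 : ℝ)) (T^[j] x)) / (M : ℝ)
        - (ν A).toReal) ^ 2 ∂ν
      ≤ 2 * ((M₁ : ℝ) + 1) * (ν A).toReal / (M : ℝ)
        + 2 * D * K * (ν A).toReal ^ 2 * β ^ (M₁ + 1) / ((1 - β) * (M : ℝ)) := by
  classical
  set a : ℝ := (ν A).toReal with ha_def
  have ha0 : 0 ≤ a := ENNReal.toReal_nonneg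
  have hMR : (0 : ℝ) < (M : ℝ) := by exact_mod_cast hM
  have hβ' : 0 < 1 - β := by linarith
  -- the preimage sets
  set B : ℕ → Set X := fun n => (T^[n]) ⁻¹' A with hB_def
  have hBm : ∀ n, MeasurableSet (B n) := fun n => (hT.iterate n).measurable hA
  have hνB : ∀ n, ν (B n) = ν A := fun n =>
    (hT.iterate n).measure_preimage hA.nullMeasurableSet
  have hBfin : ∀ s : Set X, ν s ≠ ⊤ := fun s => (measure_ne_top ν s)
  -- centered indicator functions
  set g : ℕ → X → ℝ := fun j x => (B j).indicator (fun _ => (1 : ℝ)) x - a with hg_def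
  have hint1 : ∀ n, Integrable ((B n).indicator (fun _ => (1 : ℝ))) ν := fun n =>
    (integrable_const (1 : ℝ)).indicator (hBm n)
  have hI1 : ∀ n, ∫ x, (B n).indicator (fun _ => (1 : ℝ)) x ∂ν = a := by
    intro n
    rw [integral_indicator_const (1 : ℝ) (hBm n), measureReal_def, hνB n, smul_eq_mul, mul_one]
  -- correlation sequence
  set c : ℕ → ℝ := fun n => (ν (B n ∩ A)).toReal - a ^ 2 with hc_def
  -- pointwise product expansion
  have hprod : ∀ i j (x : X), g i x * g j x =
      (B i ∩ B j).indicator (fun _ => (1 : ℝ)) x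
        - a * (B i).indicator (fun _ => (1 : ℝ)) x
        - a * (B j).indicator (fun _ => (1 : ℝ)) x + a ^ 2 := by
    intro i j x
    by_cases hi : x ∈ B i <;> by_cases hj : x ∈ B j <;>
      simp [hg_def, Set.indicator_apply, hi, hj] <;> ring
  have hgint : ∀ i j, Integrable (fun x => g i x * g j x) ν := by
    intro i j
    rw [show (fun x => g i x * g j x) = fun x =>
        (B i ∩ B j).indicator (fun _ => (1 : ℝ)) x
          - a * (B i).indicator (fun _ => (1 : ℝ)) x
          - a * (B j).indicator (fun _ => (1 : ℝ)) x + a ^ 2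
      from funext (hprod i j)]
    exact (((((integrable_const (1 : ℝ)).indicator ((hBm i).inter (hBm j))).sub
      ((hint1 i).const_mul a)).sub ((hint1 j).const_mul a)).add (integrable_const _))
  -- intersections only depend on the distance
  have hkey : ∀ i n, ν (B i ∩ B (n + i)) = ν (B n ∩ A) := by
    intro i n
    have h1 : B (n + i) = (T^[i]) ⁻¹' (B n) := by
      simp only [hB_def, Function.iterate_add, Set.preimage_comp]
    have h2 : B i ∩ B (n + i) = (T^[i]) ⁻¹' (A ∩ B n) := by
      rw [h1]; simp only [hB_def, Set.preimage_inter]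
    rw [h2, (hT.iterate i).measure_preimage (hA.inter (hBm n)).nullMeasurableSet,
      Set.inter_comm]
  have hintersect : ∀ i j, ν (B i ∩ B j) = ν (B (Nat.dist i j) ∩ A) := by
    intro i j
    rcases le_total i j with h | h
    · have hj : j = (j - i) + i := by omega
      rw [Nat.dist_eq_sub_of_le h]
      calc ν (B i ∩ B j) = ν (B i ∩ B ((j - i) + i)) := by rw [← hj]
        _ = ν (B (j - i) ∩ A) := hkey i (j - i)
    · have hi : i = (i - j) + j := by omega
      rw [Nat.dist_comm, Nat.dist_eq_sub_of_le h, Set.inter_comm]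
      calc ν (B j ∩ B i) = ν (B j ∩ B ((i - j) + j)) := by rw [← hi]
        _ = ν (B (i - j) ∩ A) := hkey j (i - j)
  -- covariance formula
  have hcov : ∀ i j, ∫ x, g i x * g j x ∂ν = c (Nat.dist i j) := by
    intro i j
    rw [show (fun x => g i x * g j x) = fun x =>
        (B i ∩ B j).indicator (fun _ => (1 : ℝ)) x
          - a * (B i).indicator (fun _ => (1 : ℝ)) x
          - a * (B j).indicator (fun _ => (1 : ℝ)) x + a ^ 2
      from funext (hprod i j)]
    rw [integral_add (by
        exact ((((integrable_const (1 : ℝ)).indicator ((hBm i).inter (hBm j))).sub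
          ((hint1 i).const_mul a)).sub ((hint1 j).const_mul a))) (integrable_const _),
      integral_sub (by
        exact (((integrable_const (1 : ℝ)).indicator ((hBm i).inter (hBm j))).sub
          ((hint1 i).const_mul a)) ) ((hint1 j).const_mul a),
      integral_sub ((integrable_const (1 : ℝ)).indicator ((hBm i).inter (hBm j)))
        ((hint1 i).const_mul a),
      integral_indicator_const (1 : ℝ) ((hBm i).inter (hBm j)),
      integral_const_mul, integral_const_mul, hI1 i, hI1 j, integral_const]
    simp only [measureReal_def]; rw [hintersect i j]
    simp only [hc_def, measure_univ, ENNReal.toReal_one, smul_eq_mul, one_mul, mul_one]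
    ring
  -- upper bound on the covariances
  set b : ℕ → ℝ := fun n => if n ≤ M₁ then a else D * K * a ^ 2 * β ^ n with hb_def
  have hb0 : ∀ n, 0 ≤ b n := by
    intro n
    simp only [hb_def]
    split
    · exact ha0
    · positivity
  have hcb : ∀ n, c n ≤ b n := by
    intro n
    simp only [hb_def]
    rcases le_or_gt n M₁ with h | h
    · rw [if_pos h]
      have h1 : ν (B n ∩ A) ≤ ν A := measure_mono Set.inter_subset_right
      have h2 : (ν (B n ∩ A)).toReal ≤ a := ENNReal.toReal_mono (measure_ne_top ν A) h1
      have : 0 ≤ a ^ 2 := sq_nonneg a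
      simp only [hc_def]; linarith
    · rw [if_neg (by omega)]
      have habs : |c n| ≤ D * K * a ^ 2 * β ^ n := hdecay n h
      exact (le_abs_self _).trans habs
  -- row bound : for i ∈ Icc 1 M the row sum is at most twice the range sum
  have hrow : ∀ i ∈ Finset.Icc 1 M,
      (∑ j ∈ Finset.Icc 1 M, b (Nat.dist i j)) ≤ 2 * ∑ n ∈ Finset.range M, b n := by
    intro i hi
    rw [Finset.mem_Icc] at hi
    rw [← Finset.sum_filter_add_sum_filter_not (Finset.Icc 1 M) (· ≤ i)]
    have h1 : (∑ j ∈ (Finset.Icc 1 M).filter (· ≤ i), b (Nat.dist i j))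
        ≤ ∑ n ∈ Finset.range M, b n := by
      have hinj : ∀ x ∈ (Finset.Icc 1 M).filter (· ≤ i), ∀ y ∈ (Finset.Icc 1 M).filter (· ≤ i),
          i - x = i - y → x = y := by
        intro x hx y hy hxy
        simp only [Finset.mem_filter, Finset.mem_Icc] at hx hy
        omega
      have := (Finset.sum_image (f := b) hinj).symm
      calc (∑ j ∈ (Finset.Icc 1 M).filter (· ≤ i), b (Nat.dist i j))
          = ∑ j ∈ (Finset.Icc 1 M).filter (· ≤ i), b (i - j) := by
            refine Finset.sum_congr rfl fun j hj => ?_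
            simp only [Finset.mem_filter, Finset.mem_Icc] at hj
            rw [Nat.dist_comm, Nat.dist_eq_sub_of_le hj.2]
        _ = ∑ n ∈ ((Finset.Icc 1 M).filter (· ≤ i)).image (i - ·), b n := this
        _ ≤ ∑ n ∈ Finset.range M, b n := by
            refine Finset.sum_le_sum_of_subset_of_nonneg ?_ (fun n _ _ => hb0 n)
            intro n hn
            simp only [Finset.mem_image, Finset.mem_filter, Finset.mem_Icc] at hn
            obtain ⟨j, ⟨⟨hj1, hjM⟩, hji⟩, rfl⟩ := hn
            simp only [Finset.mem_range]
            omega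
    have h2 : (∑ j ∈ (Finset.Icc 1 M).filter (fun j => ¬ (j ≤ i)), b (Nat.dist i j))
        ≤ ∑ n ∈ Finset.range M, b n := by
      have hinj : ∀ x ∈ (Finset.Icc 1 M).filter (fun j => ¬ (j ≤ i)),
          ∀ y ∈ (Finset.Icc 1 M).filter (fun j => ¬ (j ≤ i)), x - i = y - i → x = y := by
        intro x hx y hy hxy
        simp only [Finset.mem_filter, Finset.mem_Icc] at hx hy
        omega
      have := (Finset.sum_image (f := b) hinj).symm
      calc (∑ j ∈ (Finset.Icc 1 M).filter (fun j => ¬ (j ≤ i)), b (Nat.dist i j))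
          = ∑ j ∈ (Finset.Icc 1 M).filter (fun j => ¬ (j ≤ i)), b (j - i) := by
            refine Finset.sum_congr rfl fun j hj => ?_
            simp only [Finset.mem_filter, Finset.mem_Icc] at hj
            rw [Nat.dist_eq_sub_of_le (by omega)]
        _ = ∑ n ∈ ((Finset.Icc 1 M).filter (fun j => ¬ (j ≤ i))).image (· - i), b n := this
        _ ≤ ∑ n ∈ Finset.range M, b n := by
            refine Finset.sum_le_sum_of_subset_of_nonneg ?_ (fun n _ _ => hb0 n)
            intro n hn
            simp only [Finset.mem_image, Finset.mem_filter, Finset.mem_Icc] at hn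
            obtain ⟨j, ⟨⟨hj1, hjM⟩, hji⟩, rfl⟩ := hn
            simp only [Finset.mem_range]
            omega
    linarith
  -- bound on the range sum
  have hrange : (∑ n ∈ Finset.range M, b n)
      ≤ ((M₁ : ℝ) + 1) * a + D * K * a ^ 2 * β ^ (M₁ + 1) / (1 - β) := by
    rw [← Finset.sum_filter_add_sum_filter_not (Finset.range M) (· ≤ M₁)]
    have h1 : (∑ n ∈ (Finset.range M).filter (· ≤ M₁), b n) ≤ ((M₁ : ℝ) + 1) * a := by
      have heq : ∀ n ∈ (Finset.range M).filter (· ≤ M₁), b n = a := by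
        intro n hn
        simp only [Finset.mem_filter] at hn
        simp [hb_def, hn.2]
      rw [Finset.sum_congr rfl heq, Finset.sum_const, nsmul_eq_mul]
      have hcard : ((Finset.range M).filter (· ≤ M₁)).card ≤ M₁ + 1 := by
        have : (Finset.range M).filter (· ≤ M₁) ⊆ Finset.range (M₁ + 1) := by
          intro n hn
          simp only [Finset.mem_filter, Finset.mem_range] at hn ⊢
          omega
        simpa using Finset.card_le_card this
      have : (((Finset.range M).filter (· ≤ M₁)).card : ℝ) ≤ (M₁ : ℝ) + 1 := by
        exact_mod_cast hcard
      nlinarith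
    have h2 : (∑ n ∈ (Finset.range M).filter (fun n => ¬ (n ≤ M₁)), b n)
        ≤ D * K * a ^ 2 * β ^ (M₁ + 1) / (1 - β) := by
      have heq : (Finset.range M).filter (fun n => ¬ (n ≤ M₁)) = Finset.Ico (M₁ + 1) M := by
        ext n
        simp only [Finset.mem_filter, Finset.mem_range, Finset.mem_Ico]
        omega
      have heq2 : ∀ n ∈ Finset.Ico (M₁ + 1) M, b n = D * K * a ^ 2 * β ^ n := by
        intro n hn
        simp only [Finset.mem_Ico] at hn
        simp only [hb_def, if_neg (show ¬ n ≤ M₁ by omega)]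
      rw [heq, Finset.sum_congr rfl heq2, ← Finset.mul_sum]
      have hgeom : (∑ n ∈ Finset.Ico (M₁ + 1) M, β ^ n) ≤ β ^ (M₁ + 1) / (1 - β) := by
        rcases le_or_gt M (M₁ + 1) with h | h
        · rw [Finset.Ico_eq_empty (by omega)]
          simp
          positivity
        · rw [geom_sum_Ico (by linarith : β ≠ 1) (by omega)]
          have hswap : (β ^ M - β ^ (M₁ + 1)) / (β - 1)
              = (β ^ (M₁ + 1) - β ^ M) / (1 - β) := by
            rw [div_eq_div_iff (by linarith) (by linarith)]
            ring
          rw [hswap]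
          have hpm : 0 ≤ β ^ M := by positivity
          gcongr
          linarith
      calc D * K * a ^ 2 * (∑ n ∈ Finset.Ico (M₁ + 1) M, β ^ n)
          ≤ D * K * a ^ 2 * (β ^ (M₁ + 1) / (1 - β)) := by
            refine mul_le_mul_of_nonneg_left hgeom (by positivity)
        _ = D * K * a ^ 2 * β ^ (M₁ + 1) / (1 - β) := by ring
    linarith
  -- the double sum bound
  set Z : ℝ := 2 * ((M₁ : ℝ) + 1) * a + 2 * D * K * a ^ 2 * β ^ (M₁ + 1) / (1 - β) with hZ_def
  have hsum : (∑ i ∈ Finset.Icc 1 M, ∑ j ∈ Finset.Icc 1 M, c (Nat.dist i j))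
      ≤ (M : ℝ) * Z := by
    have h1 : (∑ i ∈ Finset.Icc 1 M, ∑ j ∈ Finset.Icc 1 M, c (Nat.dist i j))
        ≤ ∑ i ∈ Finset.Icc 1 M, ∑ j ∈ Finset.Icc 1 M, b (Nat.dist i j) :=
      Finset.sum_le_sum fun i _ => Finset.sum_le_sum fun j _ => hcb _
    have h2 : (∑ i ∈ Finset.Icc 1 M, ∑ j ∈ Finset.Icc 1 M, b (Nat.dist i j))
        ≤ ∑ i ∈ Finset.Icc 1 M, 2 * ∑ n ∈ Finset.range M, b n :=
      Finset.sum_le_sum hrow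
    have h3 : (∑ _i ∈ Finset.Icc 1 M, 2 * ∑ n ∈ Finset.range M, b n)
        = (M : ℝ) * (2 * ∑ n ∈ Finset.range M, b n) := by
      rw [Finset.sum_const, Nat.card_Icc, nsmul_eq_mul]
      norm_num
    have hZ2 : Z = 2 * (((M₁ : ℝ) + 1) * a)
        + 2 * (D * K * a ^ 2 * β ^ (M₁ + 1) / (1 - β)) := by
      rw [hZ_def]; ring
    have h4 : (M : ℝ) * (2 * ∑ n ∈ Finset.range M, b n) ≤ (M : ℝ) * Z := by
      refine mul_le_mul_of_nonneg_left ?_ (le_of_lt hMR)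
      rw [hZ2]
      linarith [hrange]
    linarith
  -- rewrite the integral as the normalized double sum
  have hpt : ∀ x : X,
      ((∑ j ∈ Finset.Icc 1 M, A.indicator (fun _ => (1 : ℝ)) (T^[j] x)) / (M : ℝ) - a) ^ 2
        = (∑ i ∈ Finset.Icc 1 M, ∑ j ∈ Finset.Icc 1 M, g i x * g j x) / (M : ℝ) ^ 2 := by
    intro x
    have heq : ∀ j, A.indicator (fun _ => (1 : ℝ)) (T^[j] x)
        = (B j).indicator (fun _ => (1 : ℝ)) x := by
      intro j
      simp [hB_def, Set.indicator_apply, Set.mem_preimage]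
    rw [Finset.sum_congr rfl fun j _ => heq j]
    rw [← Finset.sum_mul_sum]
    have : (∑ j ∈ Finset.Icc 1 M, (B j).indicator (fun _ => (1 : ℝ)) x) / (M : ℝ) - a
        = (∑ j ∈ Finset.Icc 1 M, g j x) / (M : ℝ) := by
      simp only [hg_def, Finset.sum_sub_distrib, Finset.sum_const, Nat.card_Icc,
        nsmul_eq_mul, sub_div]
      congr 1
      field_simp
      simp
    rw [this]
    rw [div_pow, sq]
  have hint_eq : ∫ x, ((∑ j ∈ Finset.Icc 1 M,
        A.indicator (fun _ => (1 : ℝ)) (T^[j] x)) / (M : ℝ) - a) ^ 2 ∂ν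
      = (∑ i ∈ Finset.Icc 1 M, ∑ j ∈ Finset.Icc 1 M, c (Nat.dist i j)) / (M : ℝ) ^ 2 := by
    rw [show (fun x => ((∑ j ∈ Finset.Icc 1 M,
          A.indicator (fun _ => (1 : ℝ)) (T^[j] x)) / (M : ℝ) - a) ^ 2)
        = fun x => (∑ i ∈ Finset.Icc 1 M, ∑ j ∈ Finset.Icc 1 M, g i x * g j x) / (M : ℝ) ^ 2
      from funext hpt]
    rw [integral_div]
    congr 1
    rw [integral_finset_sum _ (fun i _ => integrable_finset_sum _ (fun j _ => hgint i j))]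
    refine Finset.sum_congr rfl fun i _ => ?_
    rw [integral_finset_sum _ (fun j _ => hgint i j)]
    exact Finset.sum_congr rfl fun j _ => hcov i j
  rw [hint_eq]
  have hfinal : (M : ℝ) * Z / (M : ℝ) ^ 2
      = 2 * ((M₁ : ℝ) + 1) * a / (M : ℝ)
        + 2 * D * K * a ^ 2 * β ^ (M₁ + 1) / ((1 - β) * (M : ℝ)) := by
    rw [hZ_def]
    field_simp
  calc (∑ i ∈ Finset.Icc 1 M, ∑ j ∈ Finset.Icc 1 M, c (Nat.dist i j)) / (M : ℝ) ^ 2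
      ≤ (M : ℝ) * Z / (M : ℝ) ^ 2 := by
        gcongr
    _ = _ := hfinal
end
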